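/- The κ–μ shadowed power density f(x) = (μ^μ m̲^{m̲} (1+κ)^μ)/(Γ(μ) Ω^μ (μκ+m̲)^{m̲}) x^{μ−1} e^{−μ(1+κ)x/Ω} ₁F₁(m̲; μ; μ²κ(1+κ)x/((μκ+m̲)Ω)) can be written as the gamma mixture f(x) = Σ_{i=0}^∞ w_i f^G(μ+i, Ω(μ+i)/(μ(1+κ)); x), with weights w_i = Γ(m̲+i)/(Γ(m̲) i!) · (μκ)^i m̲^{m̲}/(μκ+m̲)^{m̲+i}, and the weights w_i are nonnegative and sum to 1. -/

import Mathlib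

open MeasureTheory Set

/-- Gamma density with shape k and mean Ω. -/
noncomputable def fG (k Ω y : ℝ) : ℝ :=
  k ^ k / (Real.Gamma k * Ω ^ k) * y ^ (k - 1) * Real.exp (-k * y / Ω)

/-- Kummer confluent hypergeometric function ₁F₁(a;c;z). -/
noncomputable def oneF1 (a c z : ℝ) : ℝ :=
  ∑' n : ℕ, ((ascPochhammer ℝ n).eval a / (ascPochhammer ℝ n).eval c) * z ^ n / (n.factorial : ℝ)

lemma myGamma_add_nat {a : ℝ} (ha : 0 < a) (n : ℕ) :
    Real.Gamma (a + n) = (ascPochhammer ℝ n).eval a * Real.Gamma a := by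
  induction n with
  | zero => simp
  | succ n ih =>
      have h1 : a + ((n : ℕ) + 1 : ℕ) = (a + n) + 1 := by push_cast; ring
      have h2 : (0:ℝ) < a + n := by positivity
      rw [h1, Real.Gamma_add_one h2.ne', ih, ascPochhammer_succ_eval]
      ring

lemma my_exp_tsum (y : ℝ) : ∑' n : ℕ, y ^ n / (n.factorial : ℝ) = Real.exp y := by
  rw [Real.exp_eq_exp_ℝ, NormedSpace.exp_eq_tsum_div]

lemma my_int_conv {a : ℝ} (ha : 0 < a) :
    IntegrableOn (fun t : ℝ => t ^ (a - 1) * Real.exp (-t)) (Ioi 0) := by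
  exact (Real.GammaIntegral_convergent ha).congr_fun
    (fun t _ => mul_comm _ _) measurableSet_Ioi

lemma my_int_val {a : ℝ} (ha : 0 < a) :
    ∫ t in Ioi (0:ℝ), t ^ (a - 1) * Real.exp (-t) = Real.Gamma a := by
  rw [Real.Gamma_eq_integral ha]
  exact setIntegral_congr_fun measurableSet_Ioi (fun t _ => mul_comm _ _)

lemma part1 (κ μ mm Ω : ℝ) (hκ : 0 ≤ κ) (hμ : 0 < μ)
    (hmm : 0 < mm) (hΩ : 0 < Ω) (x : ℝ) (hx : 0 < x) :
        μ ^ μ * mm ^ mm * (1 + κ) ^ μ / (Real.Gamma μ * Ω ^ μ * (μ * κ + mm) ^ mm) *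
            x ^ (μ - 1) * Real.exp (-μ * (1 + κ) * x / Ω) *
            oneF1 mm μ (μ ^ 2 * κ * (1 + κ) * x / ((μ * κ + mm) * Ω)) =
          ∑' i : ℕ,
            (Real.Gamma (mm + i) / (Real.Gamma mm * (i.factorial : ℝ)) *
                ((μ * κ) ^ i * mm ^ mm / (μ * κ + mm) ^ (mm + i))) *
              fG (μ + i) (Ω * (μ + i) / (μ * (1 + κ))) x := by
  have h1κ : (0:ℝ) < 1 + κ := by linarith
  have hc : (0:ℝ) < μ * κ + mm := by positivity
  have hΓμ := Real.Gamma_pos_of_pos hμ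
  have hΓmm := Real.Gamma_pos_of_pos hmm
  rw [oneF1, ← tsum_mul_left]
  refine tsum_congr fun n => ?_
  have hμn : (0:ℝ) < μ + n := by positivity
  have hW : (0:ℝ) < Ω * (μ + n) / (μ * (1 + κ)) := by positivity
  have hPμ := ascPochhammer_pos n μ hμ
  have hn : (0:ℝ) < (n.factorial : ℝ) := by exact_mod_cast n.factorial_pos
  simp only [fG]
  rw [myGamma_add_nat hmm n, myGamma_add_nat hμ n]
  have hexp : -(μ + (n:ℝ)) * x / (Ω * (μ + n) / (μ * (1 + κ))) = -μ * (1 + κ) * x / Ω := by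
    field_simp
  rw [hexp]
  rw [div_mul_eq_div_div_swap ((μ + (n:ℝ)) ^ (μ + (n:ℝ)))]
  have eK : (μ + (n:ℝ)) ^ (μ + (n:ℝ)) / ((Ω * (μ + (n:ℝ)) / (μ * (1 + κ))) ^ (μ + (n:ℝ)))
      = μ ^ μ * (1 + κ) ^ μ / Ω ^ μ * (μ * (1 + κ) / Ω) ^ n := by
    rw [← Real.div_rpow hμn.le hW.le]
    have h2 : (μ + (n:ℝ)) / (Ω * (μ + (n:ℝ)) / (μ * (1 + κ))) = μ * (1 + κ) / Ω := by
      field_simp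
    rw [h2, Real.rpow_add (by positivity), Real.rpow_natCast]
    congr 1
    rw [Real.div_rpow (by positivity) hΩ.le, Real.mul_rpow hμ.le h1κ.le]
  rw [eK]
  have ex : x ^ (μ + (n:ℝ) - 1) = x ^ (μ - 1) * x ^ n := by
    rw [show μ + (n:ℝ) - 1 = (μ - 1) + n by ring, Real.rpow_add hx, Real.rpow_natCast]
  rw [ex]
  have ec : (μ * κ + mm) ^ (mm + (n:ℝ)) = (μ * κ + mm) ^ mm * (μ * κ + mm) ^ n := by
    rw [Real.rpow_add hc, Real.rpow_natCast]
  rw [ec]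
  have ez : (μ ^ 2 * κ * (1 + κ) * x / ((μ * κ + mm) * Ω)) ^ n
      = (μ * κ) ^ n * (μ * (1 + κ) / Ω) ^ n * x ^ n / (μ * κ + mm) ^ n := by
    rw [show μ ^ 2 * κ * (1 + κ) * x / ((μ * κ + mm) * Ω)
        = μ * κ * (μ * (1 + κ) / Ω) * x / (μ * κ + mm) from by field_simp,
      div_pow, mul_pow, mul_pow]
  rw [ez]
  have h4 : (0:ℝ) < Ω ^ μ := Real.rpow_pos_of_pos hΩ μ
  have h5 : (0:ℝ) < (μ * κ + mm) ^ mm := Real.rpow_pos_of_pos hc mm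
  field_simp

lemma part3 (κ μ mm : ℝ) (hκ : 0 ≤ κ) (hμ : 0 < μ) (hmm : 0 < mm) :
    ∑' i : ℕ, Real.Gamma (mm + i) / (Real.Gamma mm * (i.factorial : ℝ)) *
        ((μ * κ) ^ i * mm ^ mm / (μ * κ + mm) ^ (mm + (i:ℝ))) = 1 := by
  have hq : (0:ℝ) ≤ μ * κ := by positivity
  have hc : (0:ℝ) < μ * κ + mm := by positivity
  have hΓmm := Real.Gamma_pos_of_pos hmm
  set q := μ * κ with hqdef
  set c := μ * κ + mm with hcdef
  set w : ℕ → ℝ := fun i => Real.Gamma (mm + i) / (Real.Gamma mm * (i.factorial : ℝ)) *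
      (q ^ i * mm ^ mm / c ^ (mm + (i:ℝ))) with hwdef
  set g : ℕ → ℝ → ℝ := fun i t =>
      q ^ i * mm ^ mm / (Real.Gamma mm * (i.factorial : ℝ) * c ^ (mm + (i:ℝ))) *
        (t ^ (mm + (i:ℝ) - 1) * Real.exp (-t)) with hgdef
  have hmi : ∀ i : ℕ, (0:ℝ) < mm + i := fun i => by positivity
  have hfac : ∀ i : ℕ, (0:ℝ) < (i.factorial : ℝ) := fun i => by exact_mod_cast i.factorial_pos
  have hgnn : ∀ i : ℕ, ∀ t ∈ Ioi (0:ℝ), 0 ≤ g i t := by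
    intro i t ht
    have h1 : (0:ℝ) ≤ q ^ i := pow_nonneg hq i
    have h2 : (0:ℝ) < c ^ (mm + (i:ℝ)) := Real.rpow_pos_of_pos hc _
    have h3 : (0:ℝ) ≤ t ^ (mm + (i:ℝ) - 1) := Real.rpow_nonneg (le_of_lt ht) _
    exact mul_nonneg (div_nonneg (mul_nonneg h1 (Real.rpow_nonneg hmm.le _)) (by positivity))
      (mul_nonneg h3 (Real.exp_pos _).le)
  have hgint : ∀ i : ℕ, IntegrableOn (g i) (Ioi 0) := fun i =>
    (my_int_conv (hmi i)).const_mul _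
  have hwg : ∀ i, w i = ∫ t in Ioi (0:ℝ), g i t := by
    intro i
    rw [hgdef]
    simp only
    rw [MeasureTheory.integral_const_mul, my_int_val (hmi i)]
    rw [hwdef]
    simp only
    ring
  have key : ∀ i, ENNReal.ofReal (w i) = ∫⁻ t in Ioi 0, ENNReal.ofReal (g i t) := by
    intro i
    rw [hwg i, MeasureTheory.ofReal_integral_eq_lintegral_ofReal (hgint i)]
    filter_upwards [ae_restrict_mem measurableSet_Ioi] with t ht using hgnn i t ht
  have hmeas : ∀ i : ℕ, AEMeasurable (fun t => ENNReal.ofReal (g i t))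
      ((volume : Measure ℝ).restrict (Ioi 0)) := by
    intro i
    rw [hgdef]
    exact (Measurable.aemeasurable (by fun_prop))
  have hKpos : (0:ℝ) < mm ^ mm / (Real.Gamma mm * c ^ mm) := by
    have := Real.rpow_pos_of_pos hmm mm
    have := Real.rpow_pos_of_pos hc mm
    positivity
  have hsum1 : ∑' i, ENNReal.ofReal (w i) = 1 := by
    calc ∑' i, ENNReal.ofReal (w i)
        = ∑' i, ∫⁻ t in Ioi 0, ENNReal.ofReal (g i t) := tsum_congr key
      _ = ∫⁻ t in Ioi 0, ∑' i, ENNReal.ofReal (g i t) := (lintegral_tsum hmeas).symm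
      _ = ∫⁻ t in Ioi 0, ENNReal.ofReal
            (mm ^ mm / (Real.Gamma mm * c ^ mm) * (t ^ (mm - 1) * Real.exp (-(mm / c * t)))) := by
          apply setLIntegral_congr_fun measurableSet_Ioi
          intro t ht
          have hterm : ∀ i : ℕ, g i t = (mm ^ mm / (Real.Gamma mm * c ^ mm) *
              (t ^ (mm - 1) * Real.exp (-t))) * ((q * t / c) ^ i / (i.factorial : ℝ)) := by
            intro i
            have e1 : c ^ (mm + (i:ℝ)) = c ^ mm * c ^ i := by
              rw [Real.rpow_add hc, Real.rpow_natCast]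
            have e2 : t ^ (mm + (i:ℝ) - 1) = t ^ (mm - 1) * t ^ i := by
              rw [show mm + (i:ℝ) - 1 = (mm - 1) + i by ring, Real.rpow_add ht,
                Real.rpow_natCast]
            rw [hgdef]
            simp only
            rw [e1, e2, div_pow, mul_pow]
            have h5 : (0:ℝ) < c ^ mm := Real.rpow_pos_of_pos hc mm
            field_simp
            ring
          have hsummable : Summable fun i : ℕ => g i t := by
            apply Summable.congr (f := fun i : ℕ => (mm ^ mm / (Real.Gamma mm * c ^ mm) *
              (t ^ (mm - 1) * Real.exp (-t))) * ((q * t / c) ^ i / (i.factorial : ℝ)))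
            · exact (Real.summable_pow_div_factorial (q * t / c)).mul_left _
            · exact fun i => (hterm i).symm
          beta_reduce
          rw [← ENNReal.ofReal_tsum_of_nonneg (fun i => hgnn i t ht) hsummable]
          congr 1
          rw [tsum_congr hterm, tsum_mul_left, my_exp_tsum]
          rw [show Real.exp (-(mm / c * t)) = Real.exp (-t) * Real.exp (q * t / c) from by
            rw [← Real.exp_add]; congr 1; field_simp; ring]
          ring
      _ = ENNReal.ofReal (mm ^ mm / (Real.Gamma mm * c ^ mm) * ((1 / (mm / c)) ^ mm *
            Real.Gamma mm)) := by
          have hb : (0:ℝ) < mm / c := by positivity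
          have hint2 : IntegrableOn
              (fun t : ℝ => mm ^ mm / (Real.Gamma mm * c ^ mm) *
                (t ^ (mm - 1) * Real.exp (-(mm / c * t)))) (Ioi 0) := by
            apply Integrable.const_mul
            have base := integrableOn_rpow_mul_exp_neg_mul_rpow (p := 1) (s := mm - 1)
              (b := mm / c) (by linarith) zero_lt_one hb
            refine base.congr_fun (fun t ht => ?_) measurableSet_Ioi
            beta_reduce
            rw [Real.rpow_one]
            ring_nf
          rw [← MeasureTheory.ofReal_integral_eq_lintegral_ofReal hint2]
          · rw [MeasureTheory.integral_const_mul,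
              Real.integral_rpow_mul_exp_neg_mul_Ioi hmm hb]
          · filter_upwards [ae_restrict_mem measurableSet_Ioi] with t ht
            have h3 : (0:ℝ) ≤ t ^ (mm - 1) := Real.rpow_nonneg (le_of_lt ht) _
            exact mul_nonneg hKpos.le (mul_nonneg h3 (Real.exp_pos _).le)
      _ = 1 := by
          rw [one_div_div]
          have hmul : mm ^ mm * (c / mm) ^ mm = c ^ mm := by
            rw [← Real.mul_rpow hmm.le (by positivity), mul_div_cancel₀ _ hmm.ne']
          have h5 : (0:ℝ) < c ^ mm := Real.rpow_pos_of_pos hc mm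
          rw [show mm ^ mm / (Real.Gamma mm * c ^ mm) * ((c / mm) ^ mm * Real.Gamma mm)
              = (1:ℝ) from by
            field_simp
            linear_combination hmul]
          exact ENNReal.ofReal_one
  have hwnn : ∀ i, 0 ≤ w i := by
    intro i
    have h1 : (0:ℝ) ≤ q ^ i := pow_nonneg hq i
    have h2 : (0:ℝ) < c ^ (mm + (i:ℝ)) := Real.rpow_pos_of_pos hc _
    have h0 : (0:ℝ) ≤ Real.Gamma (mm + i) := (Real.Gamma_pos_of_pos (hmi i)).le
    exact mul_nonneg (div_nonneg h0 (by positivity))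
      (div_nonneg (mul_nonneg h1 (Real.rpow_nonneg hmm.le _)) h2.le)
  calc ∑' i, w i = ∑' i, (ENNReal.ofReal (w i)).toReal := by
        exact tsum_congr fun i => (ENNReal.toReal_ofReal (hwnn i)).symm
    _ = (∑' i, ENNReal.ofReal (w i)).toReal :=
        (ENNReal.tsum_toReal_eq (fun _ => ENNReal.ofReal_ne_top)).symm
    _ = 1 := by rw [hsum1]; rfl

/-- The κ–μ shadowed power density as a countable mixture of gamma densities, with
nonnegative weights summing to one. -/
theorem kappa_mu_shadowed_gamma_mixture (κ μ mm Ω : ℝ) (hκ : 0 ≤ κ) (hμ : 0 < μ)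
    (hmm : 0 < mm) (hΩ : 0 < Ω) :
    (∀ x : ℝ, 0 < x →
        μ ^ μ * mm ^ mm * (1 + κ) ^ μ / (Real.Gamma μ * Ω ^ μ * (μ * κ + mm) ^ mm) *
            x ^ (μ - 1) * Real.exp (-μ * (1 + κ) * x / Ω) *
            oneF1 mm μ (μ ^ 2 * κ * (1 + κ) * x / ((μ * κ + mm) * Ω)) =
          ∑' i : ℕ,
            (Real.Gamma (mm + i) / (Real.Gamma mm * (i.factorial : ℝ)) *
                ((μ * κ) ^ i * mm ^ mm / (μ * κ + mm) ^ (mm + i))) *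
              fG (μ + i) (Ω * (μ + i) / (μ * (1 + κ))) x) ∧
      (∀ i : ℕ, 0 ≤ Real.Gamma (mm + i) / (Real.Gamma mm * (i.factorial : ℝ)) *
          ((μ * κ) ^ i * mm ^ mm / (μ * κ + mm) ^ (mm + i))) ∧
      (∑' i : ℕ, Real.Gamma (mm + i) / (Real.Gamma mm * (i.factorial : ℝ)) *
          ((μ * κ) ^ i * mm ^ mm / (μ * κ + mm) ^ (mm + i)) = 1) := by
  refine ⟨fun x hx => part1 κ μ mm Ω hκ hμ hmm hΩ x hx, fun i => ?_, part3 κ μ mm hκ hμ hmm⟩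
  have hq : (0:ℝ) ≤ μ * κ := by positivity
  have hc : (0:ℝ) < μ * κ + mm := by positivity
  have h0 : (0:ℝ) ≤ Real.Gamma (mm + i) := Real.Gamma_nonneg_of_nonneg (by positivity)
  have hΓmm := Real.Gamma_pos_of_pos hmm
  have hfac : (0:ℝ) < (i.factorial : ℝ) := by exact_mod_cast i.factorial_pos
  have h2 : (0:ℝ) < (μ * κ + mm) ^ (mm + (i:ℝ)) := Real.rpow_pos_of_pos hc _
  exact mul_nonneg (div_nonneg h0 (by positivity))
    (div_nonneg (mul_nonneg (pow_nonneg hq i) (Real.rpow_nonneg hmm.le _)) h2.le)
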